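/- There exists an absolute constant c > 0 with the following property. Let d, n ≥ 1 and k ≥ 1 be integers, R > 0, α ≥ 1, δ ∈ (0,1/2), and ε ∈ (0,R]. Let x_1,…,x_n lie in the closed ball B(0,R) ⊂ ℝ^d and let U ∈ [0,1]^{n×k} be a feasible membership matrix. Suppose m ≥ c·R⁴k^{4α}·ε^{−4}·log(2k/δ) and I_1,…,I_m are independent random indices, each uniformly distributed on {1,…,n}. Then Σ_{p=1}^m U_{I_p t₁}^α ≥ m/k^α > 0 for any t₁ maximizing j ↦ Σ_{p=1}^m U_{I_p j}^α over j ∈ [k], and with probability at least 1 − δ one additionally has Σ_{i=1}^n U_{i t₁}^α > 0 and ‖μ̂_{t₁} − μ_{t₁}‖₂ ≤ ε, where μ_j = (Σ_{i=1}^n U_{ij}^α x_i)/(Σ_{i=1}^n U_{ij}^α) and μ̂_j = (Σ_{p=1}^m U_{I_p j}^α x_{I_p})/(Σ_{p=1}^m U_{I_p j}^α). -/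

import Mathlib

open scoped BigOperators
open MeasureTheory ProbabilityTheory Finset

namespace LCME

lemma exp_le_one_add_add_sq {t : ℝ} (ht : t ≤ 1) : Real.exp t ≤ 1 + t + t ^ 2 := by
  rcases le_or_gt t (-1) with h | h
  · have h1 : Real.exp t ≤ 1 := by
      rw [show (1:ℝ) = Real.exp 0 from Real.exp_zero.symm]
      exact Real.exp_le_exp.2 (by linarith)
    nlinarith
  · have habs : |t| ≤ 1 := abs_le.2 ⟨by linarith, ht⟩
    have hb := Real.exp_bound habs (n := 3) (by norm_num)
    have hsum : ∑ m ∈ Finset.range 3, t ^ m / (m.factorial : ℝ) = 1 + t + t ^ 2 / 2 := by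
      norm_num [Finset.sum_range_succ, Nat.factorial]
    rw [hsum] at hb
    have h3 : |t| ^ 3 ≤ t ^ 2 := by
      have : |t| ^ 3 = |t| * t ^ 2 := by rw [pow_succ, sq_abs]; ring
      rw [this]
      nlinarith [abs_nonneg t, sq_nonneg t]
    have := abs_le.1 hb
    have hle : Real.exp t - (1 + t + t ^ 2 / 2) ≤ |t| ^ 3 * (4 / (6 * 3)) := by
      have h4 : ((3:ℕ).succ : ℝ) / ((3:ℕ).factorial * 3) = 4 / (6 * 3) := by
        norm_num [Nat.factorial]
      linarith [this.2, h4 ▸ this.2]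
    nlinarith [h3]

lemma sum_exp_le {n : ℕ} {B l : ℝ} (hl : 0 ≤ l) (hlB : l * B ≤ 1)
    (Z : Fin n → ℝ) (hZ0 : ∑ y, Z y = 0) (hZ : ∀ y, |Z y| ≤ B) :
    ∑ y, Real.exp (l * Z y) ≤ (n : ℝ) * (1 + l ^ 2 * B ^ 2) := by
  have key : ∀ y, Real.exp (l * Z y) ≤ 1 + l * Z y + l ^ 2 * B ^ 2 := by
    intro y
    have h1 : l * Z y ≤ 1 := by
      calc l * Z y ≤ l * |Z y| := by
            exact mul_le_mul_of_nonneg_left (le_abs_self _) hl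
      _ ≤ l * B := mul_le_mul_of_nonneg_left (hZ y) hl
      _ ≤ 1 := hlB
    have h2 : (l * Z y) ^ 2 ≤ l ^ 2 * B ^ 2 := by
      have := hZ y
      have habs : |l * Z y| ≤ l * B := by
        rw [abs_mul, abs_of_nonneg hl]
        exact mul_le_mul_of_nonneg_left (hZ y) hl
      calc (l * Z y) ^ 2 = |l * Z y| ^ 2 := (sq_abs _).symm
      _ ≤ (l * B) ^ 2 := by
          apply pow_le_pow_left₀ (abs_nonneg _) habs
      _ = l ^ 2 * B ^ 2 := by ring
    calc Real.exp (l * Z y) ≤ 1 + l * Z y + (l * Z y) ^ 2 := exp_le_one_add_add_sq h1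
    _ ≤ 1 + l * Z y + l ^ 2 * B ^ 2 := by linarith
  calc ∑ y, Real.exp (l * Z y) ≤ ∑ y, (1 + l * Z y + l ^ 2 * B ^ 2) :=
        Finset.sum_le_sum fun y _ => key y
  _ = (n : ℝ) * (1 + l ^ 2 * B ^ 2) := by
      rw [Finset.sum_add_distrib, Finset.sum_add_distrib, ← Finset.mul_sum, hZ0]
      simp
      ring

lemma sum_cons_eq {n mm : ℕ} {M : Type*} [AddCommMonoid M] (F : (Fin (mm+1) → Fin n) → M) :
    ∑ v : Fin (mm+1) → Fin n, F v = ∑ y : Fin n, ∑ w : Fin mm → Fin n, F (Fin.cons y w) := by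
  rw [← (Fintype.sum_equiv (Fin.consEquiv (fun _ => Fin n))
      (fun yw : Fin n × (Fin mm → Fin n) => F (Fin.cons yw.1 yw.2)) (fun v => F v)
      (fun ⟨y, w⟩ => rfl))]
  exact Fintype.sum_prod_type (f := fun yw => F (Fin.cons yw.1 yw.2))

section
variable {n : ℕ}

lemma azuma_mgf (hn : 1 ≤ n) {B l : ℝ} (hB : 0 ≤ B) (hl : 0 ≤ l) (hlB : l * B ≤ 1) :
    ∀ (mm : ℕ) (h : (Fin mm → Fin n) → ℝ),
    (∀ (p : Fin mm) (v : Fin mm → Fin n) (y : Fin n),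
        |h v - h (Function.update v p y)| ≤ B) →
    ∑ v, Real.exp (l * (h v - (∑ w, h w) / (n : ℝ) ^ mm)) ≤
      (n : ℝ) ^ mm * (1 + l ^ 2 * B ^ 2) ^ mm := by
  intro mm
  induction mm with
  | zero =>
    intro h _
    have : ∑ v : Fin 0 → Fin n, Real.exp (l * (h v - (∑ w, h w) / (n:ℝ) ^ 0)) =
        Real.exp (l * (h default - h default / 1)) := by
      rw [Fintype.sum_unique (fun v : Fin 0 → Fin n =>
        Real.exp (l * (h v - (∑ w, h w) / (n:ℝ) ^ 0)))]
      congr 1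
      rw [Fintype.sum_unique h]
      norm_num
    rw [this]
    simp
  | succ mm ih =>
    intro h hbd
    have hnR : (0:ℝ) < (n:ℝ) := by exact_mod_cast hn
    set h' : (Fin mm → Fin n) → ℝ := fun w => (∑ y, h (Fin.cons y w)) / n with hh'
    -- mean relation
    have hsum : ∑ v, h v = ∑ w, ∑ y, h (Fin.cons y w) := by
      rw [sum_cons_eq h]; exact Finset.sum_comm
    have hmean : (∑ v, h v) / (n:ℝ) ^ (mm + 1) = (∑ w, h' w) / (n:ℝ) ^ mm := by
      rw [hsum]
      have : ∑ w, h' w = (∑ w, ∑ y, h (Fin.cons y w)) / n := by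
        rw [hh']; rw [← Finset.sum_div]
      rw [this, div_div, ← pow_succ']
    set μ : ℝ := (∑ v, h v) / (n:ℝ) ^ (mm + 1) with hμ
    -- pointwise deviation bound for the last coordinate
    have hZbd : ∀ (w : Fin mm → Fin n) (y : Fin n), |h (Fin.cons y w) - h' w| ≤ B := by
      intro w y
      have : h (Fin.cons y w) - h' w =
          (∑ y' : Fin n, (h (Fin.cons y w) - h (Fin.cons y' w))) / n := by
        rw [Finset.sum_sub_distrib, Finset.sum_const, Finset.card_univ, Fintype.card_fin, hh']
        field_simp
        ring
      rw [this, abs_div, abs_of_pos hnR, div_le_iff₀ hnR]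
      calc |∑ y' : Fin n, (h (Fin.cons y w) - h (Fin.cons y' w))|
          ≤ ∑ y' : Fin n, |h (Fin.cons y w) - h (Fin.cons y' w)| :=
            Finset.abs_sum_le_sum_abs _ _
        _ ≤ ∑ _y' : Fin n, B := by
            apply Finset.sum_le_sum
            intro y' _
            have := hbd 0 (Fin.cons y w) y'
            rwa [Fin.update_cons_zero] at this
        _ = B * n := by simp [mul_comm]
    -- h' satisfies bounded differences
    have hbd' : ∀ (p : Fin mm) (w : Fin mm → Fin n) (y : Fin n),
        |h' w - h' (Function.update w p y)| ≤ B := by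
      intro p w y
      have : h' w - h' (Function.update w p y) =
          (∑ y' : Fin n, (h (Fin.cons y' w) - h (Fin.cons y' (Function.update w p y)))) / n := by
        rw [Finset.sum_sub_distrib, hh']
        field_simp
      rw [this, abs_div, abs_of_pos hnR, div_le_iff₀ hnR]
      calc |∑ y' : Fin n, (h (Fin.cons y' w) - h (Fin.cons y' (Function.update w p y)))|
          ≤ ∑ y' : Fin n, |h (Fin.cons y' w) - h (Fin.cons y' (Function.update w p y))| :=
            Finset.abs_sum_le_sum_abs _ _
        _ ≤ ∑ _y' : Fin n, B := by
            apply Finset.sum_le_sum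
            intro y' _
            have := hbd p.succ (Fin.cons y' w) y
            rwa [← Fin.cons_update] at this
        _ = B * n := by simp [mul_comm]
    -- main computation
    calc ∑ v, Real.exp (l * (h v - μ))
        = ∑ w, ∑ y, Real.exp (l * (h (Fin.cons y w) - μ)) := by
          rw [sum_cons_eq (fun v => Real.exp (l * (h v - μ)))]; exact Finset.sum_comm
      _ = ∑ w, Real.exp (l * (h' w - μ)) * ∑ y, Real.exp (l * (h (Fin.cons y w) - h' w)) := by
          apply Finset.sum_congr rfl
          intro w _
          rw [Finset.mul_sum]
          apply Finset.sum_congr rfl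
          intro y _
          rw [← Real.exp_add]
          congr 1
          ring
      _ ≤ ∑ w, Real.exp (l * (h' w - μ)) * ((n:ℝ) * (1 + l ^ 2 * B ^ 2)) := by
          apply Finset.sum_le_sum
          intro w _
          apply mul_le_mul_of_nonneg_left _ (Real.exp_nonneg _)
          apply sum_exp_le hl hlB
          · rw [Finset.sum_sub_distrib, Finset.sum_const, Finset.card_univ, Fintype.card_fin, nsmul_eq_mul, hh']
            field_simp
            ring
          · exact hZbd w
      _ = ((n:ℝ) * (1 + l ^ 2 * B ^ 2)) * ∑ w, Real.exp (l * (h' w - μ)) := by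
          rw [← Finset.sum_mul]; ring
      _ ≤ ((n:ℝ) * (1 + l ^ 2 * B ^ 2)) * ((n:ℝ) ^ mm * (1 + l ^ 2 * B ^ 2) ^ mm) := by
          apply mul_le_mul_of_nonneg_left
          · rw [hmean]
            exact ih h' hbd'
          · positivity
      _ = (n:ℝ) ^ (mm + 1) * (1 + l ^ 2 * B ^ 2) ^ (mm + 1) := by ring
end

section
variable {E : Type*} [NormedAddCommGroup E] [InnerProductSpace ℝ E] {n : ℕ}

lemma sum_norm_sq_le (hn : 1 ≤ n) (Y : Fin n → E) {b : ℝ}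
    (hY : ∀ i, ‖Y i‖ ≤ b) (h0 : ∑ i, Y i = 0) :
    ∀ mm : ℕ, ∑ v : Fin mm → Fin n, ‖∑ p, Y (v p)‖ ^ 2 ≤ (n:ℝ) ^ mm * (mm * b ^ 2) := by
  have hb : 0 ≤ b := le_trans (norm_nonneg _) (hY ⟨0, hn⟩)
  intro mm
  induction mm with
  | zero =>
    rw [Fintype.sum_unique fun v : Fin 0 → Fin n => ‖∑ p, Y (v p)‖ ^ 2]
    simp
  | succ mm ih =>
    have hcard : (Fintype.card (Fin mm → Fin n) : ℝ) = (n:ℝ) ^ mm := by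
      simp [Fintype.card_fun]
    calc ∑ v : Fin (mm+1) → Fin n, ‖∑ p, Y (v p)‖ ^ 2
        = ∑ w : Fin mm → Fin n, ∑ y : Fin n, ‖Y y + ∑ p, Y (w p)‖ ^ 2 := by
          rw [sum_cons_eq fun v => ‖∑ p, Y (v p)‖ ^ 2, Finset.sum_comm]
          apply Finset.sum_congr rfl; intro w _
          apply Finset.sum_congr rfl; intro y _
          congr 1
          rw [Fin.sum_univ_succ]
          simp
      _ = ∑ w : Fin mm → Fin n, ((∑ y, ‖Y y‖ ^ 2) + (n:ℝ) * ‖∑ p, Y (w p)‖ ^ 2) := by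
          apply Finset.sum_congr rfl; intro w _
          have : ∀ y : Fin n, ‖Y y + ∑ p, Y (w p)‖ ^ 2 =
              ‖Y y‖ ^ 2 + 2 * (inner ℝ (Y y) (∑ p, Y (w p)) : ℝ) + ‖∑ p, Y (w p)‖ ^ 2 :=
            fun y => norm_add_sq_real _ _
          rw [Finset.sum_congr rfl fun y _ => this y]
          rw [Finset.sum_add_distrib, Finset.sum_add_distrib, ← Finset.mul_sum,
            ← sum_inner, h0]
          simp [mul_comm]
      _ ≤ ∑ _w : Fin mm → Fin n, ((n:ℝ) * b ^ 2 + (n:ℝ) * ‖∑ p, Y (_w p)‖ ^ 2) := by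
          apply Finset.sum_le_sum; intro w _
          have : ∑ y, ‖Y y‖ ^ 2 ≤ (n:ℝ) * b ^ 2 := by
            calc ∑ y, ‖Y y‖ ^ 2 ≤ ∑ _y : Fin n, b ^ 2 :=
                  Finset.sum_le_sum fun y _ =>
                    pow_le_pow_left₀ (norm_nonneg _) (hY y) 2
              _ = (n:ℝ) * b ^ 2 := by simp [mul_comm]
          linarith
      _ = (n:ℝ) ^ mm * ((n:ℝ) * b ^ 2) + (n:ℝ) * ∑ w : Fin mm → Fin n, ‖∑ p, Y (w p)‖ ^ 2 := by
          rw [Finset.sum_add_distrib, Finset.sum_const, ← Finset.mul_sum]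
          rw [nsmul_eq_mul]
          norm_num [Finset.card_univ, Fintype.card_fun]
      _ ≤ (n:ℝ) ^ mm * ((n:ℝ) * b ^ 2) + (n:ℝ) * ((n:ℝ) ^ mm * (mm * b ^ 2)) := by
          have hnR : (0:ℝ) ≤ (n:ℝ) := Nat.cast_nonneg n
          nlinarith [ih]
      _ = (n:ℝ) ^ (mm+1) * ((mm + 1 : ℕ) * b ^ 2) := by
          push_cast
          ring
end

section
variable {E : Type*} [NormedAddCommGroup E] [InnerProductSpace ℝ E] {n : ℕ}

lemma count_tail (hn : 1 ≤ n) {mm : ℕ} (hm : 1 ≤ mm) (Y : Fin n → E) {b : ℝ} (hb : 0 < b)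
    (hY : ∀ i, ‖Y i‖ ≤ b) (h0 : ∑ i, Y i = 0) {s : ℝ} (hs0 : 0 < s)
    (hmean : (mm:ℝ) * b ^ 2 ≤ s ^ 2 / 4) (hlam : s ≤ 8 * b * mm) :
    ((univ.filter (fun v : Fin mm → Fin n => s < ‖∑ p, Y (v p)‖)).card : ℝ)
      ≤ (n:ℝ) ^ mm * Real.exp (-(s ^ 2) / (64 * b ^ 2 * mm)) := by
  set h : (Fin mm → Fin n) → ℝ := fun v => ‖∑ p, Y (v p)‖ with hh
  have hmmR : (0:ℝ) < (mm:ℝ) := by exact_mod_cast hm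
  have hnRpos : (0:ℝ) < (n:ℝ) ^ mm := by positivity
  set M : ℝ := (∑ w, h w) / (n:ℝ) ^ mm with hM
  -- bounded differences
  have hbd : ∀ (p : Fin mm) (v : Fin mm → Fin n) (y : Fin n),
      |h v - h (Function.update v p y)| ≤ 2 * b := by
    intro p v y
    have hSv : ∑ p', Y (v p') = (∑ p' ∈ univ \ {p}, Y (v p')) + Y (v p) :=
      Finset.sum_eq_sum_sdiff_singleton_add (Finset.mem_univ p) _
    have hS' : ∑ p', Y (Function.update v p y p') = Y y + ∑ p' ∈ univ \ {p}, Y (v p') := by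
      have hcomp : ∀ p', Y (Function.update v p y p') = Function.update (Y ∘ v) p (Y y) p' := by
        intro p'
        rw [← Function.comp_update]
        rfl
      rw [Finset.sum_congr rfl fun p' _ => hcomp p']
      rw [Finset.sum_update_of_mem (Finset.mem_univ p)]
      rfl
    have hdiff : (∑ p', Y (v p')) - ∑ p', Y (Function.update v p y p') = Y (v p) - Y y := by
      rw [hSv, hS']; abel
    calc |h v - h (Function.update v p y)|
        ≤ ‖(∑ p', Y (v p')) - ∑ p', Y (Function.update v p y p')‖ := abs_norm_sub_norm_le _ _
      _ = ‖Y (v p) - Y y‖ := by rw [hdiff]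
      _ ≤ ‖Y (v p)‖ + ‖Y y‖ := norm_sub_le _ _
      _ ≤ 2 * b := by have := hY (v p); have := hY y; linarith
  -- mean bound : M ≤ s / 2
  have hMnonneg : 0 ≤ M := by
    apply div_nonneg _ (le_of_lt hnRpos)
    exact Finset.sum_nonneg fun w _ => norm_nonneg _
  have hMs : M ≤ s / 2 := by
    have hcs : (∑ w, h w) ^ 2 ≤ (n:ℝ) ^ mm * ∑ w, h w ^ 2 := by
      have := sq_sum_le_card_mul_sum_sq (s := (univ : Finset (Fin mm → Fin n))) (f := h)
      have hcard : ((univ : Finset (Fin mm → Fin n)).card : ℝ) = (n:ℝ) ^ mm := by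
        simp [Finset.card_univ, Fintype.card_fun]
      rwa [hcard] at this
    have hvar : ∑ w, h w ^ 2 ≤ (n:ℝ) ^ mm * (mm * b ^ 2) :=
      sum_norm_sq_le hn Y hY h0 mm
    have hM2 : M ^ 2 ≤ (mm:ℝ) * b ^ 2 := by
      rw [hM, div_pow]
      rw [div_le_iff₀ (by positivity)]
      calc (∑ w, h w) ^ 2 ≤ (n:ℝ) ^ mm * ((n:ℝ) ^ mm * (mm * b ^ 2)) := by
            calc (∑ w, h w) ^ 2 ≤ (n:ℝ) ^ mm * ∑ w, h w ^ 2 := hcs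
            _ ≤ (n:ℝ) ^ mm * ((n:ℝ) ^ mm * (mm * b ^ 2)) :=
                mul_le_mul_of_nonneg_left hvar (le_of_lt hnRpos)
      _ = (mm:ℝ) * b ^ 2 * ((n:ℝ) ^ mm) ^ 2 := by ring
    nlinarith
  -- Markov with Azuma
  set l : ℝ := s / (16 * b ^ 2 * mm) with hl
  have hlpos : 0 < l := by positivity
  have hlB : l * (2 * b) ≤ 1 := by
    rw [hl, div_mul_eq_mul_div, div_le_one (by positivity)]
    nlinarith
  have hazuma := azuma_mgf hn (by positivity : (0:ℝ) ≤ 2 * b) (le_of_lt hlpos) hlB mm h hbd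
  have hexp : (1 + l ^ 2 * (2*b) ^ 2) ^ mm ≤ Real.exp (l ^ 2 * (2*b) ^ 2 * mm) := by
    calc (1 + l ^ 2 * (2*b) ^ 2) ^ mm ≤ (Real.exp (l ^ 2 * (2*b) ^ 2)) ^ mm := by
          apply pow_le_pow_left₀ (by positivity)
          linarith [Real.add_one_le_exp (l ^ 2 * (2*b) ^ 2)]
      _ = Real.exp (l ^ 2 * (2*b) ^ 2 * mm) := by
          rw [← Real.exp_nat_mul]; ring_nf
  -- counting
  have hsubset : (univ.filter (fun v : Fin mm → Fin n => s < h v)) ⊆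
      (univ.filter (fun v : Fin mm → Fin n => M + s/2 ≤ h v)) := by
    intro v hv
    rw [Finset.mem_filter] at hv ⊢
    exact ⟨hv.1, by linarith [hv.2]⟩
  have hmarkov : ((univ.filter (fun v : Fin mm → Fin n => M + s/2 ≤ h v)).card : ℝ) *
      Real.exp (l * (s/2)) ≤ ∑ v, Real.exp (l * (h v - M)) := by
    calc ((univ.filter (fun v : Fin mm → Fin n => M + s/2 ≤ h v)).card : ℝ) *
        Real.exp (l * (s/2))
        = ∑ _v ∈ univ.filter (fun v : Fin mm → Fin n => M + s/2 ≤ h v),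
            Real.exp (l * (s/2)) := by rw [Finset.sum_const, nsmul_eq_mul]
      _ ≤ ∑ v ∈ univ.filter (fun v : Fin mm → Fin n => M + s/2 ≤ h v),
            Real.exp (l * (h v - M)) := by
          apply Finset.sum_le_sum
          intro v hv
          rw [Finset.mem_filter] at hv
          apply Real.exp_le_exp.2
          apply mul_le_mul_of_nonneg_left _ (le_of_lt hlpos)
          linarith [hv.2]
      _ ≤ ∑ v, Real.exp (l * (h v - M)) := by
          apply Finset.sum_le_sum_of_subset_of_nonneg (Finset.filter_subset _ _)
          intro v _ _
          exact Real.exp_nonneg _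
  have hfinal : ((univ.filter (fun v : Fin mm → Fin n => M + s/2 ≤ h v)).card : ℝ)
      ≤ (n:ℝ) ^ mm * Real.exp (-(s ^ 2) / (64 * b ^ 2 * mm)) := by
    have h1 : ((univ.filter (fun v : Fin mm → Fin n => M + s/2 ≤ h v)).card : ℝ) *
        Real.exp (l * (s/2)) ≤ (n:ℝ) ^ mm * Real.exp (l ^ 2 * (2*b) ^ 2 * mm) := by
      calc ((univ.filter (fun v : Fin mm → Fin n => M + s/2 ≤ h v)).card : ℝ) *
          Real.exp (l * (s/2)) ≤ ∑ v, Real.exp (l * (h v - M)) := hmarkov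
        _ ≤ (n:ℝ) ^ mm * (1 + l ^ 2 * (2*b) ^ 2) ^ mm := hazuma
        _ ≤ (n:ℝ) ^ mm * Real.exp (l ^ 2 * (2*b) ^ 2 * mm) :=
            mul_le_mul_of_nonneg_left hexp (le_of_lt hnRpos)
    have h2 : ((univ.filter (fun v : Fin mm → Fin n => M + s/2 ≤ h v)).card : ℝ)
        ≤ (n:ℝ) ^ mm * Real.exp (l ^ 2 * (2*b) ^ 2 * mm) * (Real.exp (l * (s/2)))⁻¹ := by
      have h3 := (le_div_iff₀ (Real.exp_pos (l * (s/2)))).2 h1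
      rwa [div_eq_mul_inv] at h3
    calc ((univ.filter (fun v : Fin mm → Fin n => M + s/2 ≤ h v)).card : ℝ)
        ≤ (n:ℝ) ^ mm * Real.exp (l ^ 2 * (2*b) ^ 2 * mm) * (Real.exp (l * (s/2)))⁻¹ := h2
      _ = (n:ℝ) ^ mm * Real.exp (-(s ^ 2) / (64 * b ^ 2 * mm)) := by
          rw [← Real.exp_neg, mul_assoc, ← Real.exp_add]
          congr 1
          rw [hl]
          field_simp
          ring
  calc ((univ.filter (fun v : Fin mm → Fin n => s < h v)).card : ℝ)
      ≤ ((univ.filter (fun v : Fin mm → Fin n => M + s/2 ≤ h v)).card : ℝ) := by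
        exact_mod_cast Finset.card_le_card hsubset
    _ ≤ (n:ℝ) ^ mm * Real.exp (-(s ^ 2) / (64 * b ^ 2 * mm)) := hfinal
end

lemma cluster_count {E : Type*} [NormedAddCommGroup E] [InnerProductSpace ℝ E] {n : ℕ}
    (hn : 1 ≤ n) {mm : ℕ} (hm : 1 ≤ mm) (x : Fin n → E) {R : ℝ} (hR : 0 < R)
    (hx : ∀ i, ‖x i‖ ≤ R) (w : Fin n → ℝ) (hw0 : ∀ i, 0 ≤ w i) (hw1 : ∀ i, w i ≤ 1)
    (ha : 0 < ∑ i, w i) {s : ℝ} (hs0 : 0 < s) (hmean : (mm:ℝ) * (2*R) ^ 2 ≤ s ^ 2 / 4)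
    (hlam : s ≤ 8 * (2*R) * mm) (F : Finset (Fin mm → Fin n))
    (hF : ∀ v ∈ F, s < ‖∑ p, w (v p) • (x (v p) - (∑ i, w i)⁻¹ • ∑ i, w i • x i)‖) :
    (F.card : ℝ) ≤ (n:ℝ) ^ mm * Real.exp (-(s ^ 2) / (64 * (2*R) ^ 2 * mm)) := by
  set μ : E := (∑ i, w i)⁻¹ • ∑ i, w i • x i with hμ
  set Y : Fin n → E := fun i => w i • (x i - μ) with hY
  have hμR : ‖μ‖ ≤ R := by
    have hsum : ‖∑ i, w i • x i‖ ≤ (∑ i, w i) * R := by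
      calc ‖∑ i, w i • x i‖ ≤ ∑ i, ‖w i • x i‖ := norm_sum_le _ _
        _ = ∑ i, w i * ‖x i‖ := by
            apply Finset.sum_congr rfl; intro i _
            rw [norm_smul, Real.norm_eq_abs, abs_of_nonneg (hw0 i)]
        _ ≤ ∑ i, w i * R := Finset.sum_le_sum fun i _ =>
            mul_le_mul_of_nonneg_left (hx i) (hw0 i)
        _ = (∑ i, w i) * R := by rw [← Finset.sum_mul]
    calc ‖μ‖ = (∑ i, w i)⁻¹ * ‖∑ i, w i • x i‖ := by
          rw [hμ, norm_smul, Real.norm_eq_abs, abs_of_pos (inv_pos.2 ha)]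
      _ ≤ (∑ i, w i)⁻¹ * ((∑ i, w i) * R) :=
          mul_le_mul_of_nonneg_left hsum (le_of_lt (inv_pos.2 ha))
      _ = R := by field_simp
  have hYb : ∀ i, ‖Y i‖ ≤ 2 * R := by
    intro i
    calc ‖Y i‖ = w i * ‖x i - μ‖ := by
          rw [hY, norm_smul, Real.norm_eq_abs, abs_of_nonneg (hw0 i)]
      _ ≤ 1 * (‖x i‖ + ‖μ‖) := by
          apply mul_le_mul (hw1 i) (norm_sub_le _ _) (norm_nonneg _) zero_le_one
      _ ≤ 2 * R := by
          have := hx i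
          linarith
  have hY0 : ∑ i, Y i = 0 := by
    rw [hY]
    simp only [smul_sub]
    rw [Finset.sum_sub_distrib, ← Finset.sum_smul, hμ, smul_smul,
      mul_inv_cancel₀ (ne_of_gt ha), one_smul, sub_self]
  have hmain := count_tail hn hm Y (b := 2*R) (by positivity) hYb hY0 hs0 hmean hlam
  have hsub : F ⊆ univ.filter (fun v : Fin mm → Fin n => s < ‖∑ p, Y (v p)‖) := by
    intro v hv
    exact Finset.mem_filter.2 ⟨Finset.mem_univ _, hF v hv⟩
  calc (F.card : ℝ) ≤ ((univ.filter (fun v : Fin mm → Fin n => s < ‖∑ p, Y (v p)‖)).card : ℝ) := by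
        exact_mod_cast Finset.card_le_card hsub
    _ ≤ (n:ℝ) ^ mm * Real.exp (-(s ^ 2) / (64 * (2*R) ^ 2 * mm)) := hmain

end LCME

set_option maxHeartbeats 4000000 in
theorem largest_cluster_mean_estimate :
    ∃ c : ℝ, 0 < c ∧
      ∀ (d n k : ℕ), 1 ≤ d → 1 ≤ n → 1 ≤ k →
      ∀ (R α δ ε : ℝ), 0 < R → 1 ≤ α →
        δ ∈ Set.Ioo (0 : ℝ) (1 / 2) → ε ∈ Set.Ioc (0 : ℝ) R →
      ∀ (x : Fin n → EuclideanSpace ℝ (Fin d)),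
        (∀ i, x i ∈ Metric.closedBall (0 : EuclideanSpace ℝ (Fin d)) R) →
      ∀ (U : Fin n → Fin k → ℝ),
        (∀ i j, U i j ∈ Set.Icc (0 : ℝ) 1) →
        (∀ i, ∑ j, U i j = 1) →
      ∀ m : ℕ,
        c * R ^ 4 * (k : ℝ) ^ (4 * α) * ε⁻¹ ^ 4 * Real.log (2 * k / δ) ≤ (m : ℝ) →
      ∀ (Ω : Type) (_ : MeasurableSpace Ω) (P : Measure Ω),
        IsProbabilityMeasure P →
      ∀ I : Fin m → Ω → Fin n,
        iIndepFun (m := fun _ => (⊤ : MeasurableSpace (Fin n))) I P →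
        (∀ (p : Fin m) (i : Fin n), P {ω | I p ω = i} = 1 / (n : ENNReal)) →
      ∀ t₁ : Ω → Fin k,
        (∀ (ω : Ω) (j : Fin k),
          ∑ p, U (I p ω) j ^ α ≤ ∑ p, U (I p ω) (t₁ ω) ^ α) →
      (∀ ω : Ω, (m : ℝ) / (k : ℝ) ^ α ≤ ∑ p, U (I p ω) (t₁ ω) ^ α ∧
          0 < (m : ℝ) / (k : ℝ) ^ α) ∧
      ENNReal.ofReal (1 - δ) ≤
        P {ω | 0 < ∑ i, U i (t₁ ω) ^ α ∧
          ‖((∑ p, U (I p ω) (t₁ ω) ^ α)⁻¹ • ∑ p, (U (I p ω) (t₁ ω) ^ α) • x (I p ω)) -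
            ((∑ i, U i (t₁ ω) ^ α)⁻¹ • ∑ i, (U i (t₁ ω) ^ α) • x i)‖ ≤ ε} := by
  classical
  refine ⟨512, by norm_num, ?_⟩
  intro d n k hd hn hk R α δ ε hR hα hδ hε x hx U hU hUrow m hm Ω mΩ P hP I hIndep hunif t₁ hmax
  obtain ⟨hδ0, hδhalf⟩ := hδ
  obtain ⟨hε0, hεR⟩ := hε
  have hα0 : (0:ℝ) ≤ α := le_trans zero_le_one hα
  have hkR : (1:ℝ) ≤ (k:ℝ) := by exact_mod_cast hk
  have hkpos : (0:ℝ) < (k:ℝ) := lt_of_lt_of_le zero_lt_one hkR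
  set K : ℝ := (k:ℝ) ^ α with hKdef
  have hK1 : 1 ≤ K := Real.one_le_rpow hkR hα0
  have hKpos : 0 < K := lt_of_lt_of_le zero_lt_one hK1
  set L : ℝ := Real.log (2 * k / δ) with hLdef
  have hratio : (4:ℝ) ≤ 2 * k / δ := by
    rw [le_div_iff₀ hδ0]
    nlinarith
  have hratio0 : (0:ℝ) < 2 * k / δ := lt_of_lt_of_le (by norm_num) hratio
  have hL1 : 1 ≤ L := by
    rw [hLdef, Real.le_log_iff_exp_le hratio0]
    have := Real.exp_one_lt_d9
    linarith
  -- rewrite the sample-size hypothesis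
  have hKpow : (k:ℝ) ^ (4 * α) = K ^ (4:ℕ) := by
    rw [hKdef, ← Real.rpow_natCast ((k:ℝ) ^ α) 4, ← Real.rpow_mul (le_of_lt hkpos)]
    norm_num [mul_comm]
  have hm' : 512 * R ^ 4 * K ^ (4:ℕ) * ε⁻¹ ^ 4 * L ≤ (m:ℝ) := by
    rw [← hKpow]; exact hm
  have hmR0 : (0:ℝ) < (m:ℝ) := by
    refine lt_of_lt_of_le ?_ hm'
    have : (0:ℝ) < ε⁻¹ := inv_pos.2 hε0
    positivity
  have hm1 : 1 ≤ m := by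
    by_contra hcon
    push_neg at hcon
    interval_cases m
    · simp at hmR0
  -- Part 1 : pigeonhole
  have hrow : ∀ i : Fin n, (1:ℝ) ≤ (k:ℝ) ^ (α - 1) * ∑ j, U i j ^ α := by
    intro i
    have h := Real.rpow_sum_le_const_mul_sum_rpow_of_nonneg (univ : Finset (Fin k))
      (f := U i) (p := α) hα (fun j _ => (hU i j).1)
    rw [hUrow i, Real.one_rpow] at h
    simpa [Finset.card_univ] using h
  have part1 : ∀ ω : Ω, (m:ℝ) / K ≤ ∑ p, U (I p ω) (t₁ ω) ^ α := by
    intro ω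
    have hchain : (m:ℝ) ≤ (k:ℝ) ^ (α - 1) * ∑ j, ∑ p, U (I p ω) j ^ α := by
      calc (m:ℝ) = ∑ _p : Fin m, (1:ℝ) := by simp
        _ ≤ ∑ p : Fin m, (k:ℝ) ^ (α - 1) * ∑ j, U (I p ω) j ^ α :=
            Finset.sum_le_sum fun p _ => hrow (I p ω)
        _ = (k:ℝ) ^ (α - 1) * ∑ p, ∑ j, U (I p ω) j ^ α := by
            rw [Finset.mul_sum]
        _ = (k:ℝ) ^ (α - 1) * ∑ j, ∑ p, U (I p ω) j ^ α := by
            rw [Finset.sum_comm]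
    have hmax' : ∑ j, ∑ p, U (I p ω) j ^ α ≤ (k:ℝ) * ∑ p, U (I p ω) (t₁ ω) ^ α := by
      calc ∑ j, ∑ p, U (I p ω) j ^ α ≤ ∑ _j : Fin k, ∑ p, U (I p ω) (t₁ ω) ^ α :=
            Finset.sum_le_sum fun j _ => hmax ω j
        _ = (k:ℝ) * ∑ p, U (I p ω) (t₁ ω) ^ α := by
            rw [Finset.sum_const, Finset.card_univ, nsmul_eq_mul]
            simp
    have hcomb : (m:ℝ) ≤ K * ∑ p, U (I p ω) (t₁ ω) ^ α := by
      have hpow : (k:ℝ) ^ (α - 1) * (k:ℝ) = K := by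
        rw [hKdef]
        nth_rewrite 2 [← Real.rpow_one (k:ℝ)]
        rw [← Real.rpow_add hkpos]
        norm_num
      calc (m:ℝ) ≤ (k:ℝ) ^ (α - 1) * ∑ j, ∑ p, U (I p ω) j ^ α := hchain
        _ ≤ (k:ℝ) ^ (α - 1) * ((k:ℝ) * ∑ p, U (I p ω) (t₁ ω) ^ α) := by
            apply mul_le_mul_of_nonneg_left hmax'
            exact le_of_lt (Real.rpow_pos_of_pos hkpos _)
        _ = K * ∑ p, U (I p ω) (t₁ ω) ^ α := by rw [← hpow]; ring
    rw [div_le_iff₀ hKpos]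
    linarith [hcomb]
  have part1b : 0 < (m:ℝ) / K := div_pos hmR0 hKpos
  refine ⟨fun ω => ⟨part1 ω, part1b⟩, ?_⟩
  -- Part 2
  have hnpos : (0:ℝ) < (n:ℝ) := by exact_mod_cast hn
  set s : ℝ := ε * m / K with hsdef
  have hs0 : 0 < s := div_pos (mul_pos hε0 hmR0) hKpos
  have hw0 : ∀ i j, 0 ≤ U i j ^ α := fun i j => Real.rpow_nonneg (hU i j).1 α
  have hw1 : ∀ i j, U i j ^ α ≤ 1 := fun i j => Real.rpow_le_one (hU i j).1 (hU i j).2 hα0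
  have hxR : ∀ i, ‖x i‖ ≤ R := fun i => by
    have := hx i
    rwa [mem_closedBall_zero_iff] at this
  have hLpos : (0:ℝ) < L := lt_of_lt_of_le zero_lt_one hL1
  have hεinv1 : 1 ≤ R * ε⁻¹ := by
    have h := (one_le_div hε0).2 hεR
    rwa [div_eq_mul_inv] at h
  -- the master numeric inequality : 256 * R^2 * K^2 * L ≤ ε^2 * m
  have hmaster : 256 * R ^ 2 * K ^ 2 * L ≤ ε ^ 2 * (m:ℝ) := by
    have hkey : ε ^ 2 * (512 * R ^ 4 * K ^ (4:ℕ) * ε⁻¹ ^ 4 * L) =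
        512 * (R ^ 2 * K ^ 2 * L) * ((R * ε⁻¹) ^ 2 * K ^ 2) := by
      field_simp
    have h1 : 512 * (R ^ 2 * K ^ 2 * L) * ((R * ε⁻¹) ^ 2 * K ^ 2) ≤ ε ^ 2 * m := by
      rw [← hkey]
      exact mul_le_mul_of_nonneg_left hm' (sq_nonneg ε)
    have e1 : (1:ℝ) ≤ (R * ε⁻¹) ^ 2 := by nlinarith [hεinv1]
    have e2 : (1:ℝ) ≤ K ^ 2 := by nlinarith [hK1]
    have h2 : (1:ℝ) ≤ (R * ε⁻¹) ^ 2 * K ^ 2 := by nlinarith [e1, e2]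
    have hposRKL : (0:ℝ) < R ^ 2 * K ^ 2 * L :=
      mul_pos (mul_pos (pow_pos hR 2) (pow_pos hKpos 2)) hLpos
    have h3 : 512 * (R ^ 2 * K ^ 2 * L) * 1 ≤ 512 * (R ^ 2 * K ^ 2 * L) * ((R * ε⁻¹) ^ 2 * K ^ 2) :=
      mul_le_mul_of_nonneg_left h2 (by linarith)
    nlinarith [h3, h1, hposRKL]
  have hposRK : (0:ℝ) < R ^ 2 * K ^ 2 := mul_pos (pow_pos hR 2) (pow_pos hKpos 2)
  have h16 : 16 * R ^ 2 * K ^ 2 ≤ ε ^ 2 * (m:ℝ) := by nlinarith [hmaster, hposRK, hL1]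
  have hmean : (m:ℝ) * (2*R) ^ 2 ≤ s ^ 2 / 4 := by
    have hseq : s ^ 2 / 4 = ε ^ 2 * (m:ℝ) ^ 2 / (4 * K ^ 2) := by
      rw [hsdef]
      field_simp
    rw [hseq, le_div_iff₀ (by positivity)]
    nlinarith [h16, hmR0]
  have hlam : s ≤ 8 * (2*R) * m := by
    have h1 : s ≤ ε * m := by
      rw [hsdef]
      apply div_le_self (by positivity) hK1
    have h2 : ε * m ≤ R * m := mul_le_mul_of_nonneg_right hεR (le_of_lt hmR0)
    nlinarith [hmR0, hR]
  have hLbound : L ≤ s ^ 2 / (64 * (2*R) ^ 2 * m) := by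
    have hseq : s ^ 2 / (64 * (2*R) ^ 2 * m) = ε ^ 2 * (m:ℝ) / (256 * R ^ 2 * K ^ 2) := by
      rw [hsdef]
      field_simp
      ring
    rw [hseq, le_div_iff₀ (by positivity)]
    nlinarith [hmaster]
  have hexpL : Real.exp (-(s ^ 2) / (64 * (2*R) ^ 2 * m)) ≤ δ / (2 * k) := by
    have h1 : Real.exp (-L) = δ / (2 * k) := by
      rw [Real.exp_neg, Real.exp_log hratio0, inv_div]
    rw [← h1]
    apply Real.exp_le_exp.2
    rw [neg_div]
    linarith [hLbound]
  -- the bad set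
  set Bad : Finset (Fin m → Fin n) :=
    univ.filter (fun v => ∃ j : Fin k, 0 < (∑ i, U i j ^ α) ∧
      s < ‖∑ p, (U (v p) j ^ α) • (x (v p) - (∑ i, U i j ^ α)⁻¹ • ∑ i, (U i j ^ α) • x i)‖)
    with hBdef
  -- counting the bad set
  have hBadcard : (Bad.card : ℝ) ≤ δ * (n:ℝ) ^ m := by
    have hsub : Bad ⊆ univ.biUnion (fun j : Fin k =>
        univ.filter (fun v : Fin m → Fin n => 0 < (∑ i, U i j ^ α) ∧
          s < ‖∑ p, (U (v p) j ^ α) • (x (v p) -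
            (∑ i, U i j ^ α)⁻¹ • ∑ i, (U i j ^ α) • x i)‖)) := by
      intro v hv
      rw [hBdef, Finset.mem_filter] at hv
      obtain ⟨j, hj⟩ := hv.2
      exact Finset.mem_biUnion.2 ⟨j, Finset.mem_univ j,
        Finset.mem_filter.2 ⟨Finset.mem_univ v, hj⟩⟩
    have hcardj : ∀ j : Fin k,
        (((univ.filter (fun v : Fin m → Fin n => 0 < (∑ i, U i j ^ α) ∧
          s < ‖∑ p, (U (v p) j ^ α) • (x (v p) -
            (∑ i, U i j ^ α)⁻¹ • ∑ i, (U i j ^ α) • x i)‖)).card : ℝ))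
          ≤ (n:ℝ) ^ m * (δ / (2 * k)) := by
      intro j
      rcases le_or_gt (∑ i, U i j ^ α) 0 with haj | haj
      · have hempty : (univ.filter (fun v : Fin m → Fin n => 0 < (∑ i, U i j ^ α) ∧
            s < ‖∑ p, (U (v p) j ^ α) • (x (v p) -
              (∑ i, U i j ^ α)⁻¹ • ∑ i, (U i j ^ α) • x i)‖)) = ∅ := by
          apply Finset.filter_false_of_mem
          intro v _
          rintro ⟨h1, _⟩
          linarith
        rw [hempty]
        simp
        positivity
      · have := LCME.cluster_count hn hm1 x hR hxR (fun i => U i j ^ α)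
          (fun i => hw0 i j) (fun i => hw1 i j) haj hs0 hmean hlam
          (univ.filter (fun v : Fin m → Fin n => 0 < (∑ i, U i j ^ α) ∧
            s < ‖∑ p, (U (v p) j ^ α) • (x (v p) -
              (∑ i, U i j ^ α)⁻¹ • ∑ i, (U i j ^ α) • x i)‖))
          (fun v hv => (Finset.mem_filter.1 hv).2.2)
        refine le_trans this ?_
        apply mul_le_mul_of_nonneg_left hexpL (by positivity)
    calc (Bad.card : ℝ)
        ≤ ((univ.biUnion (fun j : Fin k =>
            univ.filter (fun v : Fin m → Fin n => 0 < (∑ i, U i j ^ α) ∧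
              s < ‖∑ p, (U (v p) j ^ α) • (x (v p) -
                (∑ i, U i j ^ α)⁻¹ • ∑ i, (U i j ^ α) • x i)‖))).card : ℝ) := by
          exact_mod_cast Finset.card_le_card hsub
      _ ≤ ∑ j : Fin k, ((univ.filter (fun v : Fin m → Fin n => 0 < (∑ i, U i j ^ α) ∧
              s < ‖∑ p, (U (v p) j ^ α) • (x (v p) -
                (∑ i, U i j ^ α)⁻¹ • ∑ i, (U i j ^ α) • x i)‖)).card : ℝ) := by
          exact_mod_cast Finset.card_biUnion_le
      _ ≤ ∑ _j : Fin k, (n:ℝ) ^ m * (δ / (2 * k)) :=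
          Finset.sum_le_sum fun j _ => hcardj j
      _ = (k:ℝ) * ((n:ℝ) ^ m * (δ / (2 * k))) := by
          rw [Finset.sum_const, Finset.card_univ, nsmul_eq_mul]
          simp
      _ = δ / 2 * (n:ℝ) ^ m := by
          field_simp
      _ ≤ δ * (n:ℝ) ^ m := by
          have : (0:ℝ) ≤ (n:ℝ) ^ m := by positivity
          nlinarith [hδ0]
  -- atoms
  set Atom : (Fin m → Fin n) → Set Ω := fun v => ⋂ p ∈ (univ : Finset (Fin m)), I p ⁻¹' {v p}
    with hAtomdef
  have hAtomP : ∀ v : Fin m → Fin n, P (Atom v) = (1 / (n:ENNReal)) ^ m := by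
    intro v
    have h1 := hIndep.measure_inter_preimage_eq_mul (S := univ) (sets := fun p => {v p})
      (fun p _ => MeasurableSpace.measurableSet_top)
    rw [hAtomdef]
    rw [h1]
    have h2 : ∀ p : Fin m, P (I p ⁻¹' {v p}) = 1 / (n:ENNReal) := by
      intro p
      have : I p ⁻¹' {v p} = {ω | I p ω = v p} := by
        ext ω
        simp [Set.mem_preimage]
      rw [this]
      exact hunif p (v p)
    rw [Finset.prod_congr rfl fun p _ => h2 p, Finset.prod_const, Finset.card_univ]
    simp
  -- the good event and the covering
  set G : Set Ω := {ω | 0 < ∑ i, U i (t₁ ω) ^ α ∧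
      ‖((∑ p, U (I p ω) (t₁ ω) ^ α)⁻¹ • ∑ p, (U (I p ω) (t₁ ω) ^ α) • x (I p ω)) -
        ((∑ i, U i (t₁ ω) ^ α)⁻¹ • ∑ i, (U i (t₁ ω) ^ α) • x i)‖ ≤ ε} with hGdef
  have hcover : Gᶜ ⊆ ⋃ v ∈ Bad, Atom v := by
    intro ω hω
    have hA := part1 ω
    have hApos : 0 < ∑ p, U (I p ω) (t₁ ω) ^ α := lt_of_lt_of_le part1b hA
    have haj : 0 < ∑ i, U i (t₁ ω) ^ α := by
      obtain ⟨p0, hp0⟩ : ∃ p0 : Fin m, 0 < U (I p0 ω) (t₁ ω) ^ α := by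
        by_contra hcon
        push_neg at hcon
        have : ∑ p, U (I p ω) (t₁ ω) ^ α ≤ 0 :=
          Finset.sum_nonpos fun p _ => hcon p
        linarith
      exact lt_of_lt_of_le hp0
        (Finset.single_le_sum (fun i _ => hw0 i (t₁ ω)) (Finset.mem_univ (I p0 ω)))
    have hεD : ε < ‖((∑ p, U (I p ω) (t₁ ω) ^ α)⁻¹ •
        ∑ p, (U (I p ω) (t₁ ω) ^ α) • x (I p ω)) -
        ((∑ i, U i (t₁ ω) ^ α)⁻¹ • ∑ i, (U i (t₁ ω) ^ α) • x i)‖ := by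
      rw [Set.mem_compl_iff, hGdef, Set.mem_setOf_eq] at hω
      push_neg at hω
      exact hω haj
    set A : ℝ := ∑ p, U (I p ω) (t₁ ω) ^ α with hAdef
    set μj : EuclideanSpace ℝ (Fin d) :=
      (∑ i, U i (t₁ ω) ^ α)⁻¹ • ∑ i, (U i (t₁ ω) ^ α) • x i with hμjdef
    have hAne : A ≠ 0 := ne_of_gt hApos
    have halg : (A⁻¹ • ∑ p, (U (I p ω) (t₁ ω) ^ α) • x (I p ω)) - μj =
        A⁻¹ • ∑ p, (U (I p ω) (t₁ ω) ^ α) • (x (I p ω) - μj) := by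
      have h1 : ∑ p, (U (I p ω) (t₁ ω) ^ α) • (x (I p ω) - μj) =
          (∑ p, (U (I p ω) (t₁ ω) ^ α) • x (I p ω)) - A • μj := by
        simp only [smul_sub]
        rw [Finset.sum_sub_distrib, ← Finset.sum_smul]
      rw [h1, smul_sub, smul_smul, inv_mul_cancel₀ hAne, one_smul]
    have hsS : s < ‖∑ p, (U (I p ω) (t₁ ω) ^ α) • (x (I p ω) - μj)‖ := by
      have hnorm : ‖(A⁻¹ • ∑ p, (U (I p ω) (t₁ ω) ^ α) • x (I p ω)) - μj‖ =
          A⁻¹ * ‖∑ p, (U (I p ω) (t₁ ω) ^ α) • (x (I p ω) - μj)‖ := by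
        rw [halg, norm_smul, Real.norm_eq_abs, abs_of_pos (inv_pos.2 hApos)]
      have h2 : ε * A < ‖∑ p, (U (I p ω) (t₁ ω) ^ α) • (x (I p ω) - μj)‖ := by
        have := hεD
        rw [hnorm, inv_mul_eq_div, lt_div_iff₀ hApos] at this
        linarith [this]
      have h3 : s ≤ ε * A := by
        have hm_le : (m:ℝ) ≤ A * K := (div_le_iff₀ hKpos).1 hA
        have h4 : ε * (m:ℝ) ≤ ε * (A * K) := mul_le_mul_of_nonneg_left hm_le (le_of_lt hε0)
        rw [hsdef, div_le_iff₀ hKpos]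
        linarith [h4]
      linarith
    have hvBad : (fun p => I p ω) ∈ Bad := by
      rw [hBdef, Finset.mem_filter]
      exact ⟨Finset.mem_univ _, ⟨t₁ ω, haj, hsS⟩⟩
    apply Set.mem_biUnion hvBad
    rw [hAtomdef]
    simp only [Set.mem_iInter]
    intro p _
    rfl
  -- putting the measure bounds together
  have hPbad : P Gᶜ ≤ ENNReal.ofReal δ := by
    calc P Gᶜ ≤ P (⋃ v ∈ Bad, Atom v) := measure_mono hcover
      _ ≤ ∑ v ∈ Bad, P (Atom v) := measure_biUnion_finset_le Bad Atom
      _ = ∑ _v ∈ Bad, (1 / (n:ENNReal)) ^ m :=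
          Finset.sum_congr rfl fun v _ => hAtomP v
      _ = (Bad.card : ENNReal) * (1 / (n:ENNReal)) ^ m := by
          rw [Finset.sum_const, nsmul_eq_mul]
      _ = ENNReal.ofReal ((Bad.card : ℝ) * ((n:ℝ)⁻¹) ^ m) := by
          have hinv : (1 / (n:ENNReal)) = ENNReal.ofReal ((n:ℝ)⁻¹) := by
            rw [one_div, ENNReal.ofReal_inv_of_pos hnpos, ENNReal.ofReal_natCast]
          rw [hinv, ← ENNReal.ofReal_pow (inv_nonneg.2 (le_of_lt hnpos)),
            ← ENNReal.ofReal_natCast Bad.card,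
            ← ENNReal.ofReal_mul (Nat.cast_nonneg _)]
      _ ≤ ENNReal.ofReal δ := by
          apply ENNReal.ofReal_le_ofReal
          have heq : (Bad.card : ℝ) * ((n:ℝ)⁻¹) ^ m = (Bad.card : ℝ) / (n:ℝ) ^ m := by
            rw [inv_pow]
            ring
          rw [heq, div_le_iff₀ (by positivity)]
          linarith [hBadcard]
  have hone : (1:ENNReal) ≤ P G + P Gᶜ := by
    have h1 : P Set.univ = 1 := measure_univ
    calc (1:ENNReal) = P Set.univ := h1.symm
      _ = P (G ∪ Gᶜ) := by rw [Set.union_compl_self]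
      _ ≤ P G + P Gᶜ := measure_union_le _ _
  calc ENNReal.ofReal (1 - δ) = 1 - ENNReal.ofReal δ := by
        rw [ENNReal.ofReal_sub _ (le_of_lt hδ0), ENNReal.ofReal_one]
    _ ≤ P G := by
        rw [tsub_le_iff_right]
        calc (1:ENNReal) ≤ P G + P Gᶜ := hone
          _ ≤ P G + ENNReal.ofReal δ := add_le_add_right hPbad _
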